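/- Let T₀ > 0, ε₀ > 0, M > 0 and let Θ, T : (0, ε₀) → ℝ be continuous functions satisfying |Θ(I) − 2T₀/I²| ≤ M/I and |T(I) − 2T₀/I| ≤ M for all I ∈ (0, ε₀). Then there exist a natural number k₀ and a constant M′ > 0 such that for every integer k ≥ k₀: (a) there exists I ∈ (0, ε₀) with Θ(I) = 2πk; and (b) every I ∈ (0, ε₀) with Θ(I) = 2πk satisfies |T(I) − 2√(πkT₀)| ≤ M′. -/

import Mathlib

open Real

set_option maxHeartbeats 1600000 in
/-- **Asymptotics of the lengths of the spiraling closed geodesics.**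
If `Θ(I) = 2T₀/I² + O(1/I)` and `T(I) = 2T₀/I + O(1)` on `(0, ε₀)`, then for every
large enough integer `k` the equation `Θ(I) = 2πk` has a solution `I ∈ (0, ε₀)`, and
every such solution satisfies `T(I) = 2√(πkT₀) + O(1)`. -/
theorem closing_lengths_asymptotics (T₀ ε₀ M : ℝ) (hT₀ : 0 < T₀) (hε₀ : 0 < ε₀)
    (hM : 0 < M) (Θ T : ℝ → ℝ)
    (hΘc : ContinuousOn Θ (Set.Ioo 0 ε₀)) (hTc : ContinuousOn T (Set.Ioo 0 ε₀))
    (hΘ : ∀ I ∈ Set.Ioo (0 : ℝ) ε₀, |Θ I - 2 * T₀ / I ^ 2| ≤ M / I)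
    (hT : ∀ I ∈ Set.Ioo (0 : ℝ) ε₀, |T I - 2 * T₀ / I| ≤ M) :
    ∃ (k₀ : ℕ) (M' : ℝ), 0 < M' ∧ ∀ k : ℕ, k₀ ≤ k →
      (∃ I ∈ Set.Ioo (0 : ℝ) ε₀, Θ I = 2 * π * k) ∧
      (∀ I ∈ Set.Ioo (0 : ℝ) ε₀, Θ I = 2 * π * k →
        |T I - 2 * Real.sqrt (π * k * T₀)| ≤ M') := by
  have hπ : 0 < π := Real.pi_pos
  set I₁ : ℝ := ε₀ / 2 with hI₁def
  have hI₁pos : 0 < I₁ := by positivity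
  have hI₁lt : I₁ < ε₀ := by simp only [hI₁def]; linarith
  set C : ℝ := 2 * T₀ / I₁ ^ 2 + M / I₁ with hCdef
  refine ⟨⌈C / (2 * π)⌉₊ + 1, 2 * M, by linarith, ?_⟩
  intro k hk
  have hk1 : 1 ≤ k := le_trans (Nat.le_add_left 1 _) hk
  have hkpos : (0 : ℝ) < k := by exact_mod_cast hk1
  have hpk : 0 < 2 * π * (k : ℝ) := by positivity
  have hC_lt : C < 2 * π * k := by
    have h1 : C / (2 * π) ≤ (⌈C / (2 * π)⌉₊ : ℝ) := Nat.le_ceil _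
    have h2 : ((⌈C / (2 * π)⌉₊ : ℝ) + 1) ≤ (k : ℝ) := by exact_mod_cast hk
    have h3 : C / (2 * π) < (k : ℝ) := by linarith
    have := (div_lt_iff₀ (by positivity : (0:ℝ) < 2 * π)).mp h3
    linarith [this]
  constructor
  · -- existence via IVT
    set I₂ : ℝ := min (I₁ / 2) (min (T₀ / (2 * M)) (Real.sqrt (T₀ / (2 * π * k)))) with hI₂def
    have hI₂pos : 0 < I₂ :=
      lt_min (by positivity) (lt_min (by positivity) (Real.sqrt_pos.mpr (by positivity)))
    have hI₂le : I₂ ≤ I₁ := le_trans (min_le_left _ _) (by linarith)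
    have hsub : Set.Icc I₂ I₁ ⊆ Set.Ioo 0 ε₀ := fun x hx =>
      ⟨lt_of_lt_of_le hI₂pos hx.1, lt_of_le_of_lt hx.2 hI₁lt⟩
    have hI₂M : 2 * M * I₂ ≤ T₀ := by
      have h : I₂ ≤ T₀ / (2 * M) :=
        le_trans (min_le_right (I₁ / 2) _) (min_le_left _ _)
      have := (le_div_iff₀ (by positivity : (0:ℝ) < 2 * M)).mp h
      linarith
    have hI₂sq : 2 * π * k * I₂ ^ 2 ≤ T₀ := by
      have h : I₂ ≤ Real.sqrt (T₀ / (2 * π * k)) :=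
        le_trans (min_le_right (I₁ / 2) _) (min_le_right _ _)
      have h2 : I₂ ^ 2 ≤ Real.sqrt (T₀ / (2 * π * k)) ^ 2 :=
        pow_le_pow_left₀ hI₂pos.le h 2
      have h3 : Real.sqrt (T₀ / (2 * π * k)) ^ 2 = T₀ / (2 * π * k) :=
        Real.sq_sqrt (by positivity)
      rw [h3] at h2
      have := (le_div_iff₀ hpk).mp h2
      linarith
    have hI₂mem : I₂ ∈ Set.Ioo (0 : ℝ) ε₀ := hsub ⟨le_refl _, hI₂le⟩
    have hI₁mem : I₁ ∈ Set.Ioo (0 : ℝ) ε₀ := hsub ⟨hI₂le, le_refl _⟩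
    -- Θ I₂ ≥ 2πk
    have hΘI₂ : 2 * π * k ≤ Θ I₂ := by
      have h := (abs_le.mp (hΘ I₂ hI₂mem)).1
      -- Θ I₂ ≥ 2T₀/I₂² - M/I₂
      have e1 : 2 * T₀ / I₂ ^ 2 * I₂ ^ 2 = 2 * T₀ := by field_simp
      have e2 : M / I₂ * I₂ ^ 2 = M * I₂ := by field_simp
      have hsq : 0 < I₂ ^ 2 := by positivity
      nlinarith [mul_le_mul_of_nonneg_right h hsq.le]
    -- Θ I₁ ≤ C < 2πk
    have hΘI₁ : Θ I₁ ≤ C := by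
      have h := (abs_le.mp (hΘ I₁ hI₁mem)).2
      simp only [hCdef]; linarith
    have hmem : (2 * π * (k : ℝ)) ∈ Set.Icc (Θ I₁) (Θ I₂) := ⟨by linarith, hΘI₂⟩
    obtain ⟨I, hI, hIΘ⟩ := intermediate_value_Icc' hI₂le (hΘc.mono hsub) hmem
    exact ⟨I, hsub hI, hIΘ⟩
  · -- the bound
    intro I hI hIk
    obtain ⟨hIpos, hIε⟩ := hI
    have hTI := abs_le.mp (hT I ⟨hIpos, hIε⟩)
    have hΘI := abs_le.mp (hΘ I ⟨hIpos, hIε⟩)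
    rw [hIk] at hΘI
    set a := Real.sqrt (T₀ / (π * k)) with ha
    have hapos : 0 < a := Real.sqrt_pos.mpr (by positivity)
    have ha2 : a ^ 2 = T₀ / (π * k) := Real.sq_sqrt (by positivity)
    have hka : 2 * π * k * a ^ 2 = 2 * T₀ := by rw [ha2]; field_simp
    -- |2πk I² - 2T₀| ≤ M I
    have e1 : 2 * T₀ / I ^ 2 * I ^ 2 = 2 * T₀ := by field_simp
    have e2 : M / I * I ^ 2 = M * I := by field_simp
    have hsq : 0 < I ^ 2 := by positivity
    have h1 : |2 * π * k * I ^ 2 - 2 * T₀| ≤ M * I := by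
      rw [abs_le]
      constructor
      · nlinarith [mul_le_mul_of_nonneg_right hΘI.1 hsq.le]
      · nlinarith [mul_le_mul_of_nonneg_right hΘI.2 hsq.le]
    -- 2πk(I+a)|I-a| ≤ M I
    have h2 : 2 * π * k * ((I + a) * |I - a|) ≤ M * I := by
      have heq : 2 * π * (k : ℝ) * ((I + a) * |I - a|) = |2 * π * k * I ^ 2 - 2 * T₀| := by
        rw [← hka,
          show 2 * π * (k:ℝ) * I ^ 2 - 2 * π * (k:ℝ) * a ^ 2 = (2 * π * (k:ℝ) * (I + a)) * (I - a)
            by ring,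
          abs_mul, abs_of_pos (by positivity : (0:ℝ) < 2 * π * (k:ℝ) * (I + a))]
        ring
      rw [heq]; exact h1
    -- sqrt(πkT₀) * a = T₀
    have hsa : Real.sqrt (π * k * T₀) * a = T₀ := by
      rw [ha, ← Real.sqrt_mul (by positivity)]
      rw [show π * (k : ℝ) * T₀ * (T₀ / (π * k)) = T₀ ^ 2 by field_simp]
      exact Real.sqrt_sq hT₀.le
    have hsqrt : Real.sqrt (π * k * T₀) = T₀ / a := by
      rw [eq_div_iff hapos.ne']; exact hsa
    -- |2T₀/I - 2√(πkT₀)| ≤ M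
    have h3 : |2 * T₀ / I - 2 * Real.sqrt (π * k * T₀)| ≤ M := by
      rw [hsqrt]
      have e3 : 2 * T₀ / I - 2 * (T₀ / a) = 2 * T₀ * (a - I) / (I * a) := by
        field_simp
      rw [e3, abs_div, abs_mul, abs_of_pos (by positivity : (0:ℝ) < 2 * T₀),
        abs_of_pos (by positivity : (0:ℝ) < I * a), div_le_iff₀ (by positivity : (0:ℝ) < I * a)]
      have habs : |a - I| = |I - a| := abs_sub_comm a I
      rw [habs]
      have H1 := mul_le_mul_of_nonneg_right h2 hapos.le
      have H2 : 0 ≤ 2 * π * (k : ℝ) * I * a * |I - a| := by positivity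
      have h4 : 2 * T₀ * |I - a| = 2 * π * k * a ^ 2 * |I - a| := by rw [hka]
      nlinarith [H1, H2, h4]
    calc |T I - 2 * Real.sqrt (π * k * T₀)|
        ≤ |T I - 2 * T₀ / I| + |2 * T₀ / I - 2 * Real.sqrt (π * k * T₀)| :=
          abs_sub_le _ _ _
      _ ≤ M + M := add_le_add (abs_le.mpr hTI) h3
      _ = 2 * M := by ring
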